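/- arXiv:1803.07625 — 7 statements merged into one kernel-verified Lean document; each statement's English description precedes it below -/
import Mathlib

section
/- Let x̂ ∈ ℝⁿ, ŷ ∈ ℝᵐ, Ŵ ∈ ℝ^{n×m}, and let u ∈ ℝⁿ, v ∈ ℝᵐ be unit vectors with (Ŵ − x̂ŷᵀ)v = σu and (Ŵ − x̂ŷᵀ)ᵀu = σv for some σ > 0 (so u, v are a left/right singular-vector pair of Ŵ − x̂ŷᵀ for the positive singular value σ). Set z := (1/√2)·(u; v) ∈ ℝ^{n+m}. Then for every x ∈ ℝⁿ, y ∈ ℝᵐ, W ∈ ℝ^{n×m} and symmetric matrices X ∈ ℝ^{n×n}, Y ∈ ℝ^{m×m} such that X − xxᵀ and Y − yyᵀ are positive semidefinite, the following implication holds: if the block matrix H := [[X, W],[Wᵀ, Y]] ∈ ℝ^{(n+m)×(n+m)} and h := (x; y) ∈ ℝ^{n+m} satisfy ⟨zzᵀ, H⟩ − (zᵀh)² ≤ 0, then ⟨uvᵀ, W⟩ − (uᵀx)(vᵀy) ≤ 0. (That is, the symmetric valid inequality ⟨zzᵀ, H⟩ − (zᵀh)² ≤ 0 together with the positive-semidefiniteness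 constraints is at least as strong as the bilinear valid inequality ⟨uvᵀ, W⟩ − (uᵀx)(vᵀy) ≤ 0.) -/
open Matrix


lemma tr_vecMulVec {α β : Type*} [Fintype α] [Fintype β]
    (a : α → ℝ) (b : β → ℝ) (M : Matrix α β ℝ) :
    ((vecMulVec a b)ᵀ * M).trace = a ⬝ᵥ (M *ᵥ b) := by
  simp only [Matrix.trace, Matrix.diag, Matrix.mul_apply, Matrix.transpose_apply,
    vecMulVec_apply, dotProduct, mulVec, Finset.mul_sum]
  rw [Finset.sum_comm]
  apply Finset.sum_congr rfl; intro i _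
  apply Finset.sum_congr rfl; intro j _
  ring

lemma vmv_mulVec {α β : Type*} [Fintype β]
    (x : α → ℝ) (y w : β → ℝ) :
    vecMulVec x y *ᵥ w = (y ⬝ᵥ w) • x := by
  ext i
  simp only [mulVec, vecMulVec_apply, dotProduct, Pi.smul_apply, smul_eq_mul,
    Finset.sum_mul]
  apply Finset.sum_congr rfl; intro j _
  ring

/-- the symmetric valid inequality `⟨zz', H⟩ - (z'h)² ≤ 0` together with
positive-semidefiniteness of `X - xx'` and `Y - yy'` implies the bilinear valid
inequality `⟨uv', W⟩ - (u'x)(v'y) ≤ 0`, where `z := (1/√2)(u; v)` comes from a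
left/right singular-vector pair of `Ŵ - x̂ŷ'` for a positive singular value `σ`. -/
theorem stmt0 {n m : ℕ}
    (xh : Fin n → ℝ) (yh : Fin m → ℝ) (Wh : Matrix (Fin n) (Fin m) ℝ)
    (u : Fin n → ℝ) (v : Fin m → ℝ) (σ : ℝ)
    (hu : u ⬝ᵥ u = 1) (hv : v ⬝ᵥ v = 1) (hσ : 0 < σ)
    (hMv : (Wh - vecMulVec xh yh) *ᵥ v = σ • u)
    (hMu : (Wh - vecMulVec xh yh)ᵀ *ᵥ u = σ • v)
    (z : Fin n ⊕ Fin m → ℝ)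
    (hz : z = (Real.sqrt 2)⁻¹ • Sum.elim u v) :
    ∀ (x : Fin n → ℝ) (y : Fin m → ℝ) (W : Matrix (Fin n) (Fin m) ℝ)
      (X : Matrix (Fin n) (Fin n) ℝ) (Y : Matrix (Fin m) (Fin m) ℝ),
      X.IsSymm → Y.IsSymm →
      (X - vecMulVec x x).PosSemidef → (Y - vecMulVec y y).PosSemidef →
      (((vecMulVec z z)ᵀ * fromBlocks X W Wᵀ Y).trace
          - (z ⬝ᵥ Sum.elim x y) ^ 2 ≤ 0) →
      ((vecMulVec u v)ᵀ * W).trace - (u ⬝ᵥ x) * (v ⬝ᵥ y) ≤ 0 := by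
  intro x y W X Y hXs hYs hX hY hineq
  -- PSD bounds
  have hXu : (u ⬝ᵥ x) ^ 2 ≤ u ⬝ᵥ (X *ᵥ u) := by
    have h := (posSemidef_iff_dotProduct_mulVec.mp hX).2 u
    rw [star_trivial, sub_mulVec, dotProduct_sub, vmv_mulVec, dotProduct_smul,
      smul_eq_mul, dotProduct_comm x u] at h
    nlinarith [h]
  have hYv : (v ⬝ᵥ y) ^ 2 ≤ v ⬝ᵥ (Y *ᵥ v) := by
    have h := (posSemidef_iff_dotProduct_mulVec.mp hY).2 v
    rw [star_trivial, sub_mulVec, dotProduct_sub, vmv_mulVec, dotProduct_smul,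
      smul_eq_mul, dotProduct_comm y v] at h
    nlinarith [h]
  rw [tr_vecMulVec]
  have hWT : v ⬝ᵥ (Wᵀ *ᵥ u) = u ⬝ᵥ (W *ᵥ v) := by
    rw [Matrix.mulVec_transpose, dotProduct_comm, ← Matrix.dotProduct_mulVec]
  have hc : (Real.sqrt 2)⁻¹ * (Real.sqrt 2)⁻¹ = 1/2 := by
    rw [← mul_inv, ← Real.sqrt_mul_self (by norm_num : (0:ℝ) ≤ 2)]
    norm_num
  rw [tr_vecMulVec, hz] at hineq
  simp only [smul_dotProduct, dotProduct_smul, Matrix.mulVec_smul, smul_eq_mul,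
    fromBlocks_mulVec] at hineq
  have h1 : (Sum.elim u v ∘ Sum.inl) = u := rfl
  have h2 : (Sum.elim u v ∘ Sum.inr) = v := rfl
  rw [h1, h2, sumElim_dotProduct_sumElim, sumElim_dotProduct_sumElim,
    dotProduct_add, dotProduct_add, hWT] at hineq
  set a := u ⬝ᵥ x
  set b := v ⬝ᵥ y
  set w := u ⬝ᵥ (W *ᵥ v)
  set p := u ⬝ᵥ (X *ᵥ u)
  set q := v ⬝ᵥ (Y *ᵥ v)
  have key : 1/2 * (p + w + (w + q)) - 1/2 * (a + b)^2 ≤ 0 := by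
    nlinarith [hineq, hc, Real.sqrt_nonneg 2]
  nlinarith [hXu, hYv, key]
end

section
/- Let x̂ ∈ ℝⁿ, ŷ ∈ ℝᵐ, Ŵ ∈ ℝ^{n×m}, u ∈ ℝⁿ, v ∈ ℝᵐ. Define Ĥ := [[x̂x̂ᵀ, Ŵ],[Ŵᵀ, ŷŷᵀ]] ∈ ℝ^{(n+m)×(n+m)}, ĥ := (x̂; ŷ) ∈ ℝ^{n+m}, and z := (1/√2)·(u; v). Then ⟨zzᵀ, Ĥ⟩ − (zᵀĥ)² = uᵀ(Ŵ − x̂ŷᵀ)v = ⟨uvᵀ, Ŵ⟩ − (uᵀx̂)(vᵀŷ). In particular, the symmetric inequality ⟨zzᵀ, H⟩ − (zᵀh)² ≤ 0 and the bilinear inequality ⟨uvᵀ, W⟩ − (uᵀx)(vᵀy) ≤ 0 are violated by the same amount at the corresponding lifted points (ĥ, Ĥ) and (x̂, ŷ, Ŵ). -/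
open Matrix

lemma tr_vmv {k l : Type*} [Fintype k] [Fintype l] (a : k → ℝ) (b : l → ℝ)
    (M : Matrix k l ℝ) :
    ((vecMulVec a b)ᵀ * M).trace = a ⬝ᵥ (M *ᵥ b) := by
  simp [trace, Matrix.mul_apply, vecMulVec_apply, dotProduct, mulVec, Finset.mul_sum,
    mul_comm, mul_assoc, mul_left_comm]
  rw [Finset.sum_comm]

lemma vmv_mv {k l : Type*} [Fintype l] (a : k → ℝ) (b v : l → ℝ) :
    vecMulVec a b *ᵥ v = (b ⬝ᵥ v) • a := by
  ext i
  simp [vecMulVec_apply, mulVec, dotProduct, Finset.mul_sum, mul_comm, mul_assoc,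
    mul_left_comm]

lemma dp_transpose {k l : Type*} [Fintype k] [Fintype l] (W : Matrix k l ℝ) (u : k → ℝ)
    (v : l → ℝ) : v ⬝ᵥ (Wᵀ *ᵥ u) = u ⬝ᵥ (W *ᵥ v) := by
  simp [dotProduct, mulVec, Finset.mul_sum, mul_comm, mul_assoc, mul_left_comm]
  rw [Finset.sum_comm]

/-- with `Ĥ := [[x̂x̂', Ŵ],[Ŵ', ŷŷ']]`, `ĥ := (x̂; ŷ)`, and
`z := (1/√2)(u; v)`, we have `⟨zz', Ĥ⟩ - (z'ĥ)² = u'(Ŵ - x̂ŷ')v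
= ⟨uv', Ŵ⟩ - (u'x̂)(v'ŷ)`: the symmetric and bilinear inequalities are violated
by the same amount at the corresponding lifted points. -/
theorem stmt3 {n m : ℕ}
    (xh u : Fin n → ℝ) (yh v : Fin m → ℝ) (Wh : Matrix (Fin n) (Fin m) ℝ)
    (Hh : Matrix (Fin n ⊕ Fin m) (Fin n ⊕ Fin m) ℝ)
    (hHh : Hh = fromBlocks (vecMulVec xh xh) Wh Whᵀ (vecMulVec yh yh))
    (hv' : Fin n ⊕ Fin m → ℝ) (hhv : hv' = Sum.elim xh yh)
    (z : Fin n ⊕ Fin m → ℝ) (hz : z = (Real.sqrt 2)⁻¹ • Sum.elim u v) :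
    ((vecMulVec z z)ᵀ * Hh).trace - (z ⬝ᵥ hv') ^ 2
        = u ⬝ᵥ ((Wh - vecMulVec xh yh) *ᵥ v)
      ∧ ((vecMulVec z z)ᵀ * Hh).trace - (z ⬝ᵥ hv') ^ 2
        = ((vecMulVec u v)ᵀ * Wh).trace - (u ⬝ᵥ xh) * (v ⬝ᵥ yh) := by
  have hc : ((Real.sqrt 2)⁻¹ : ℝ) ^ 2 = 1 / 2 := by
    rw [inv_pow, Real.sq_sqrt (by norm_num : (0:ℝ) ≤ 2)]
    norm_num
  have key : ((vecMulVec z z)ᵀ * Hh).trace - (z ⬝ᵥ hv') ^ 2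
      = u ⬝ᵥ (Wh *ᵥ v) - (u ⬝ᵥ xh) * (v ⬝ᵥ yh) := by
    subst hHh hhv hz
    rw [tr_vmv]
    simp only [smul_dotProduct, dotProduct_smul, mulVec_smul, fromBlocks_mulVec,
      Sum.elim_comp_inl, Sum.elim_comp_inr, sumElim_dotProduct_sumElim, vmv_mv,
      dotProduct_add, dp_transpose, smul_eq_mul]
    rw [mul_pow]
    ring_nf
    simp only [hc, dotProduct_comm xh u, dotProduct_comm yh v]
    ring
  constructor
  · rw [key, sub_mulVec, dotProduct_sub, vmv_mv, dotProduct_smul, smul_eq_mul,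
      dotProduct_comm yh v]
    ring
  · rw [key, tr_vmv]
end

section
/- Let x̂ ∈ ℝⁿ, ŷ ∈ ℝᵐ, Ŵ ∈ ℝ^{n×m}, and let aₓ, bₓ ∈ ℝⁿ and a_y, b_y ∈ ℝᵐ satisfy aₓ ≤ x̂ ≤ bₓ and a_y ≤ ŷ ≤ b_y componentwise. Suppose Ŵ satisfies the McCormick inequalities: for all i ∈ {1,…,n}, j ∈ {1,…,m}: Ŵ_{ij} − b_{y,j}x̂_i − a_{x,i}ŷ_j + a_{x,i}b_{y,j} ≤ 0; Ŵ_{ij} − a_{y,j}x̂_i − b_{x,i}ŷ_j + b_{x,i}a_{y,j} ≤ 0; Ŵ_{ij} − a_{y,j}x̂_i − a_{x,i}ŷ_j + a_{x,i}a_{y,j} ≥ 0; Ŵ_{ij} − b_{y,j}x̂_i − b_{x,i}ŷ_j + b_{x,i}b_{y,j} ≥ 0. Define ĥ := (x̂; ŷ) ∈ ℝ^{n+m}, Ĥ := [[x̂x̂ᵀ, Ŵ],[Ŵᵀ, ŷŷᵀ]] ∈ ℝ^{(n+m)×(n+m)}, a_h := (aₓ; a_y), b_h := (bₓ; b_y).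 Then a_h ≤ ĥ ≤ b_h componentwise, and for all i, j ∈ {1,…,n+m}: Ĥ_{ij} − b_{h,j}ĥ_i − a_{h,i}ĥ_j + a_{h,i}b_{h,j} ≤ 0; Ĥ_{ij} − a_{h,j}ĥ_i − b_{h,i}ĥ_j + b_{h,i}a_{h,j} ≤ 0; Ĥ_{ij} − a_{h,j}ĥ_i − a_{h,i}ĥ_j + a_{h,i}a_{h,j} ≥ 0; Ĥ_{ij} − b_{h,j}ĥ_i − b_{h,i}ĥ_j + b_{h,i}b_{h,j} ≥ 0. (That is, (ĥ, Ĥ) is a feasible solution of the symmetric McCormick relaxation.) -/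
open Matrix

/-- if `(x̂, ŷ, Ŵ)` satisfies the box constraints and the McCormick
inequalities for `W = xy'`, then the lifted point `(ĥ, Ĥ)` with `ĥ := (x̂; ŷ)` and
`Ĥ := [[x̂x̂', Ŵ],[Ŵ', ŷŷ']]` satisfies the box constraints and the McCormick
inequalities of the symmetric relaxation. -/
theorem stmt7 {n m : ℕ}
    (xh ax bx : Fin n → ℝ) (yh ay by' : Fin m → ℝ)
    (Wh : Matrix (Fin n) (Fin m) ℝ)
    (hxl : ax ≤ xh) (hxu : xh ≤ bx) (hyl : ay ≤ yh) (hyu : yh ≤ by')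
    (hmc1 : ∀ (i : Fin n) (j : Fin m),
      Wh i j - by' j * xh i - ax i * yh j + ax i * by' j ≤ 0)
    (hmc2 : ∀ (i : Fin n) (j : Fin m),
      Wh i j - ay j * xh i - bx i * yh j + bx i * ay j ≤ 0)
    (hmc3 : ∀ (i : Fin n) (j : Fin m),
      Wh i j - ay j * xh i - ax i * yh j + ax i * ay j ≥ 0)
    (hmc4 : ∀ (i : Fin n) (j : Fin m),
      Wh i j - by' j * xh i - bx i * yh j + bx i * by' j ≥ 0)
    (hv' : Fin n ⊕ Fin m → ℝ) (hhv : hv' = Sum.elim xh yh)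
    (Hh : Matrix (Fin n ⊕ Fin m) (Fin n ⊕ Fin m) ℝ)
    (hHh : Hh = fromBlocks (vecMulVec xh xh) Wh Whᵀ (vecMulVec yh yh))
    (ah bh : Fin n ⊕ Fin m → ℝ)
    (hah : ah = Sum.elim ax ay) (hbh : bh = Sum.elim bx by') :
    (ah ≤ hv' ∧ hv' ≤ bh)
      ∧ (∀ i j : Fin n ⊕ Fin m,
          Hh i j - bh j * hv' i - ah i * hv' j + ah i * bh j ≤ 0)
      ∧ (∀ i j : Fin n ⊕ Fin m,
          Hh i j - ah j * hv' i - bh i * hv' j + bh i * ah j ≤ 0)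
      ∧ (∀ i j : Fin n ⊕ Fin m,
          Hh i j - ah j * hv' i - ah i * hv' j + ah i * ah j ≥ 0)
      ∧ (∀ i j : Fin n ⊕ Fin m,
          Hh i j - bh j * hv' i - bh i * hv' j + bh i * bh j ≥ 0) := by
  subst hhv hHh hah hbh
  refine ⟨⟨?_, ?_⟩, ?_, ?_, ?_, ?_⟩
  · rintro (i|j)
    · simpa using hxl i
    · simpa using hyl j
  · rintro (i|j)
    · simpa using hxu i
    · simpa using hyu j
  all_goals
    rintro (i|i) (j|j) <;>
      simp only [fromBlocks_apply₁₁, fromBlocks_apply₁₂, fromBlocks_apply₂₁,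
        fromBlocks_apply₂₂, vecMulVec_apply, transpose_apply, Sum.elim_inl, Sum.elim_inr] <;>
      first
        | nlinarith [hxl i, hxu i, hxl j, hxu j]
        | nlinarith [hyl i, hyu i, hyl j, hyu j]
        | nlinarith [hmc1 i j, hmc2 i j, hmc3 i j, hmc4 i j]
        | nlinarith [hmc1 j i, hmc2 j i, hmc3 j i, hmc4 j i]
end

section
/- Let x ∈ ℝⁿ, y ∈ ℝᵐ, u ∈ ℝⁿ, v ∈ ℝᵐ, and set W := xyᵀ, q₁ := (uᵀx + vᵀy)/2, q₂ := (uᵀx − vᵀy)/2. Suppose l₁ ≤ q₁ ≤ u₁ and l₂ ≤ q₂ ≤ u₂ for real numbers l₁, u₁, l₂, u₂. Then the two convex secant inequalities hold: uᵀWv + q₂² ≤ (l₁ + u₁)q₁ − l₁u₁ and −uᵀWv + q₁² ≤ (l₂ + u₂)q₂ − l₂u₂. -/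
open Matrix

/-- with `W := xy'`, `q₁ := (u'x + v'y)/2`, `q₂ := (u'x - v'y)/2`,
and bounds `l₁ ≤ q₁ ≤ u₁`, `l₂ ≤ q₂ ≤ u₂`, the two convex secant inequalities hold:
`u'Wv + q₂² ≤ (l₁+u₁)q₁ - l₁u₁` and `-u'Wv + q₁² ≤ (l₂+u₂)q₂ - l₂u₂`. -/
theorem stmt8 {n m : ℕ}
    (x u : Fin n → ℝ) (y v : Fin m → ℝ)
    (W : Matrix (Fin n) (Fin m) ℝ) (hW : W = vecMulVec x y)
    (q₁ q₂ : ℝ)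
    (hq₁ : q₁ = (u ⬝ᵥ x + v ⬝ᵥ y) / 2) (hq₂ : q₂ = (u ⬝ᵥ x - v ⬝ᵥ y) / 2)
    (l₁ u₁ l₂ u₂ : ℝ)
    (h₁l : l₁ ≤ q₁) (h₁u : q₁ ≤ u₁) (h₂l : l₂ ≤ q₂) (h₂u : q₂ ≤ u₂) :
    u ⬝ᵥ (W *ᵥ v) + q₂ ^ 2 ≤ (l₁ + u₁) * q₁ - l₁ * u₁
      ∧ -(u ⬝ᵥ (W *ᵥ v)) + q₁ ^ 2 ≤ (l₂ + u₂) * q₂ - l₂ * u₂ := by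
  have hval : u ⬝ᵥ (W *ᵥ v) = (u ⬝ᵥ x) * (v ⬝ᵥ y) := by
    subst hW
    simp only [mulVec, vecMulVec_apply, dotProduct, Finset.mul_sum, Finset.sum_mul]
    rw [Finset.sum_comm]
    exact Finset.sum_congr rfl fun i _ => Finset.sum_congr rfl fun j _ => by ring
  have h1 : u ⬝ᵥ (W *ᵥ v) = q₁ ^ 2 - q₂ ^ 2 := by
    rw [hval, hq₁, hq₂]; ring
  constructor
  · nlinarith [mul_nonneg (sub_nonneg.2 h₁u) (sub_nonneg.2 h₁l)]
  · nlinarith [mul_nonneg (sub_nonneg.2 h₂u) (sub_nonneg.2 h₂l)]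
end

section
/- Let a₁, b₁, a₂, b₂ ∈ ℝ with b₁ − a₁ = b₂ − a₂. Then for all p₁, p₂ ∈ ℝ, RHS_Sec(p₁, p₂) ≤ RHS_Mc(p₁, p₂); that is, when the two boxes have equal width, the secant-relaxed inequality dominates the averaged McCormick inequality. -/
/-- Right-hand side of the averaged McCormick upper inequality for `p₁p₂`
over the box `[a₁,b₁] × [a₂,b₂]`. -/
noncomputable def RHSMc (a₁ b₁ a₂ b₂ p₁ p₂ : ℝ) : ℝ :=
  ((a₂ + b₂) / 2) * p₁ + ((a₁ + b₁) / 2) * p₂ - (a₁ * b₂ + a₂ * b₁) / 2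

/-- Right-hand side of the secant-relaxed inequality obtained by replacing the
concave term `-q₁²` (with `q₁ = (p₁+p₂)/2`) by its secant. -/
noncomputable def RHSSec (a₁ b₁ a₂ b₂ p₁ p₂ : ℝ) : ℝ :=
  ((a₁ + b₁ + a₂ + b₂) / 4) * p₁ + ((a₁ + b₁ + a₂ + b₂) / 4) * p₂
    - (a₁ * b₂ + a₂ * b₁ + a₁ * b₁ + a₂ * b₂) / 4 - ((p₁ - p₂) / 2) ^ 2

/-- when the two boxes have equal width, the secant-relaxed
inequality dominates the averaged McCormick inequality. -/
theorem stmt11 (a₁ b₁ a₂ b₂ : ℝ) (hw : b₁ - a₁ = b₂ - a₂) :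
    ∀ p₁ p₂ : ℝ, RHSSec a₁ b₁ a₂ b₂ p₁ p₂ ≤ RHSMc a₁ b₁ a₂ b₂ p₁ p₂ := by
  intro p₁ p₂
  unfold RHSSec RHSMc
  nlinarith [sq_nonneg (p₁ - p₂ - (a₁ - b₂)), sq_nonneg (p₁ - p₂ - (b₁ - a₂)), hw, sq_nonneg (p₁ - p₂ - (a₁ - a₂)), sq_nonneg (p₁ - p₂ - (b₁ - b₂))]
end

section
/- Let a₁, b₁, a₂, b₂ ∈ ℝ with a₁ < b₁, a₂ < b₂, and b₁ − a₁ ≠ b₂ − a₂. Then neither of the two inequalities dominates the other: there exist p₁ ∈ [a₁, b₁], p₂ ∈ [a₂, b₂] with RHS_Sec(p₁, p₂) < RHS_Mc(p₁, p₂) (for example (p₁, p₂) = (a₁, b₂)), and there exist p₁ ∈ [a₁, b₁], p₂ ∈ [a₂, b₂] with RHS_Sec(p₁, p₂) > RHS_Mc(p₁, p₂) (for example the midpoints p₁ = (a₁+b₁)/2, p₂ = (a₂+b₂)/2). -/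
/-- when the box widths differ (and both boxes are nondegenerate),
neither inequality dominates the other. -/
theorem stmt12 (a₁ b₁ a₂ b₂ : ℝ) (h₁ : a₁ < b₁) (h₂ : a₂ < b₂)
    (hw : b₁ - a₁ ≠ b₂ - a₂) :
    (∃ p₁ ∈ Set.Icc a₁ b₁, ∃ p₂ ∈ Set.Icc a₂ b₂,
        RHSSec a₁ b₁ a₂ b₂ p₁ p₂ < RHSMc a₁ b₁ a₂ b₂ p₁ p₂)
      ∧ (∃ p₁ ∈ Set.Icc a₁ b₁, ∃ p₂ ∈ Set.Icc a₂ b₂,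
        RHSSec a₁ b₁ a₂ b₂ p₁ p₂ > RHSMc a₁ b₁ a₂ b₂ p₁ p₂) := by
  have hd : (b₁ - a₁) - (b₂ - a₂) ≠ 0 := sub_ne_zero.mpr hw
  have hsq : 0 < ((b₁ - a₁) - (b₂ - a₂)) ^ 2 := by positivity
  constructor
  · exact ⟨a₁, ⟨le_refl _, h₁.le⟩, b₂, ⟨h₂.le, le_refl _⟩, by
      simp only [RHSSec, RHSMc]; nlinarith [mul_pos (sub_pos.mpr h₁) (sub_pos.mpr h₂)]⟩
  · exact ⟨(a₁ + b₁) / 2, ⟨by linarith, by linarith⟩, (a₂ + b₂) / 2, ⟨by linarith, by linarith⟩, by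
      simp only [RHSSec, RHSMc, gt_iff_lt]; nlinarith [hsq]⟩
end

section
/- Let a₁, b₁, a₂, b₂ ∈ ℝ. Then for all p₁, p₂ ∈ ℝ, RHS_Sec(p₁, p₂) − RHS_Mc(p₁, p₂) ≤ ((b₁ − a₁) − (b₂ − a₂))²/16, and equality holds at the midpoints p₁ = (a₁ + b₁)/2, p₂ = (a₂ + b₂)/2; that is, the maximum value of the difference between the secant-relaxed right-hand side and the averaged McCormick right-hand side is ((b₁ − a₁) − (b₂ − a₂))²/16, attained at the box midpoints. -/
/-- the difference `RHSSec - RHSMc` is at most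
`((b₁-a₁)-(b₂-a₂))²/16`, with equality at the box midpoints. -/
theorem stmt13 (a₁ b₁ a₂ b₂ : ℝ) :
    (∀ p₁ p₂ : ℝ,
        RHSSec a₁ b₁ a₂ b₂ p₁ p₂ - RHSMc a₁ b₁ a₂ b₂ p₁ p₂
          ≤ ((b₁ - a₁) - (b₂ - a₂)) ^ 2 / 16)
      ∧ RHSSec a₁ b₁ a₂ b₂ ((a₁ + b₁) / 2) ((a₂ + b₂) / 2)
          - RHSMc a₁ b₁ a₂ b₂ ((a₁ + b₁) / 2) ((a₂ + b₂) / 2)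
          = ((b₁ - a₁) - (b₂ - a₂)) ^ 2 / 16 := by
  constructor
  · intro p₁ p₂
    have h : (0:ℝ) ≤ ((p₁ - p₂) / 2 - ((a₁ + b₁) - (a₂ + b₂)) / 4) ^ 2 := sq_nonneg _
    unfold RHSSec RHSMc
    nlinarith [h]
  · unfold RHSSec RHSMc; ring
end
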